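/- Let B = (b_{ij}) be an n×n integer skew-symmetrizable matrix whose underlying graph is a tree, and let C = (|b_{ij}|). If n is odd, then det(B) = 0 = det(C). If n is even, then det(B) = (−1)^{n/2}·det(C). -/

import Mathlib

open Finset

-- pairing lemma
lemma pairing {α : Type*} [DecidableEq α] (σ : α → α) (f g : α → ℤ) (c : ℤ)
    (s : Finset α) :
    (∀ i ∈ s, σ i ∈ s) → (∀ i ∈ s, σ (σ i) = i) → (∀ i ∈ s, σ i ≠ i) →
    (∀ i ∈ s, f i * f (σ i) = c * (g i * g (σ i))) →
    ∃ k, s.card = 2 * k ∧ ∏ i ∈ s, f i = c ^ k * ∏ i ∈ s, g i := by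
  induction s using Finset.strongInduction with
  | _ s ih =>
    intro h1 h2 h3 h4
    rcases s.eq_empty_or_nonempty with rfl | ⟨i, hi⟩
    · exact ⟨0, by simp⟩
    · set t := s \ {i, σ i} with ht
      have hσi : σ i ∈ s := h1 i hi
      have hne : σ i ≠ i := h3 i hi
      have hit : i ∉ t := by simp [ht]
      have hσit : σ i ∉ t := by simp [ht]
      have hts : t ⊆ s := Finset.sdiff_subset
      have hmem : ∀ j, j ∈ t ↔ j ∈ s ∧ j ≠ i ∧ j ≠ σ i := by
        intro j; simp [ht, and_assoc]
      have hsub : t ⊂ s := Finset.ssubset_iff_of_subset hts |>.2 ⟨i, hi, hit⟩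
      have h1' : ∀ j ∈ t, σ j ∈ t := by
        intro j hj
        rw [hmem] at hj ⊢
        refine ⟨h1 j hj.1, ?_, ?_⟩
        · intro hc
          have : σ (σ j) = σ i := by rw [hc]
          rw [h2 j hj.1] at this
          exact hj.2.2 this
        · intro hc
          have := congrArg σ hc
          rw [h2 j hj.1, h2 i hi] at this
          exact hj.2.1 this
      obtain ⟨k, hk, hp⟩ := ih t hsub h1' (fun j hj => h2 j (hts hj))
        (fun j hj => h3 j (hts hj)) (fun j hj => h4 j (hts hj))
      have hs : s = insert i (insert (σ i) t) := by
        ext j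
        simp only [Finset.mem_insert, hmem]
        constructor
        · intro hj
          by_cases hji : j = i
          · exact Or.inl hji
          by_cases hjσ : j = σ i
          · exact Or.inr (Or.inl hjσ)
          · exact Or.inr (Or.inr ⟨hj, hji, hjσ⟩)
        · rintro (rfl | rfl | ⟨hj, _, _⟩) <;> [exact hi; exact hσi; exact hj]
      have hiins : i ∉ insert (σ i) t := by
        simp [hit, Ne.symm hne]
      have hcard : s.card = t.card + 2 := by
        rw [hs, Finset.card_insert_of_notMem hiins, Finset.card_insert_of_notMem hσit]
      refine ⟨k + 1, by omega, ?_⟩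
      rw [hs, Finset.prod_insert hiins, Finset.prod_insert hσit,
        Finset.prod_insert hiins, Finset.prod_insert hσit, ← mul_assoc, ← mul_assoc,
        h4 i hi, hp]
      ring

-- chain walk
lemma walk_chain {V : Type*} (G : SimpleGraph V) (f : V → V) (i : V)
    (h : ∀ v, G.Adj v (f v)) :
    ∀ t k, ∃ w : G.Walk (f^[k] i) (f^[k + t] i),
      ∀ e ∈ w.edges, ∃ j, k ≤ j ∧ j < k + t ∧ e = s(f^[j] i, f^[j+1] i) := by
  intro t
  induction t with
  | zero => intro k; exact ⟨SimpleGraph.Walk.nil, by simp⟩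
  | succ t ih =>
    intro k
    obtain ⟨w, hw⟩ := ih (k + 1)
    have hadj : G.Adj (f^[k] i) (f^[k+1] i) := by
      rw [Function.iterate_succ_apply']
      exact h _
    have hend : k + 1 + t = k + (t + 1) := by omega
    refine ⟨SimpleGraph.Walk.cons hadj (w.copy rfl (by rw [hend])), ?_⟩
    intro e he
    rw [SimpleGraph.Walk.edges_cons, SimpleGraph.Walk.edges_copy, List.mem_cons] at he
    rcases he with rfl | he
    · exact ⟨k, le_refl _, by omega, rfl⟩
    · obtain ⟨j, hj1, hj2, hj3⟩ := hw e he
      exact ⟨j, by omega, by omega, hj3⟩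

-- acyclic ⇒ involution
lemma invol {n : ℕ} {G : SimpleGraph (Fin n)} (hG : G.IsAcyclic)
    (σ : Equiv.Perm (Fin n)) (h : ∀ i, G.Adj i (σ i)) : ∀ i, σ (σ i) = i := by
  intro i
  by_contra hc
  set f : Fin n → Fin n := ⇑σ with hf
  have hper : f^[orderOf σ] i = i := by
    rw [Equiv.Perm.iterate_eq_pow, pow_orderOf_eq_one]; rfl
  have hoσ : 0 < orderOf σ := orderOf_pos σ
  have hmem : i ∈ Function.periodicPts f := ⟨orderOf σ, hoσ, hper⟩
  set m := Function.minimalPeriod f i with hm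
  clear_value m
  have hmpos : 0 < m := by rw [hm]; exact Function.minimalPeriod_pos_of_mem_periodicPts hmem
  have hfm : f^[m] i = i := by rw [hm]; exact Function.isPeriodicPt_minimalPeriod f i
  have hm1 : m ≠ 1 := by
    intro h1
    rw [h1] at hfm
    simp only [Function.iterate_one] at hfm
    exact (h i).ne hfm.symm
  have hm2 : m ≠ 2 := by
    intro h2
    apply hc
    rw [h2] at hfm
    simpa [Function.iterate_succ_apply'] using hfm
  have hm3 : 3 ≤ m := by omega
  obtain ⟨w, hw⟩ := walk_chain G f i (fun v => h v) (m - 1) 1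
  have h1m : 1 + (m - 1) = m := by omega
  have hbridge := (SimpleGraph.isAcyclic_iff_forall_adj_isBridge.1 hG) (h i).symm
  rw [SimpleGraph.isBridge_iff_adj_and_forall_walk_mem_edges] at hbridge
  have hedge : s(f i, i) ∈ w.edges := by
    have := hbridge (w.copy (by simp) (by rw [h1m]; exact hfm))
    rwa [SimpleGraph.Walk.edges_copy] at this
  obtain ⟨j, hj1, hj2', hj3⟩ := hw _ hedge
  have hj2 : j < m := by omega
  rw [Sym2.eq_iff] at hj3
  rcases hj3 with ⟨hj3, hj4⟩ | ⟨hj3, hj4⟩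
  · -- f i = f^[j] i and i = f^[j+1] i
    rcases Nat.eq_or_lt_of_le hj1 with rfl | hj1'
    · apply hc
      have h2 : f^[2] i = i := hj4.symm
      simpa [Function.iterate_succ_apply'] using h2
    · have hinj : Function.Injective f := σ.injective
      have hj' : j - 1 + 1 = j := by omega
      have h5 : f (f^[j-1] i) = f i := by
        rw [← Function.iterate_succ_apply' f (j-1) i]
        simp only [Nat.succ_eq_add_one]
        rw [hj']
        exact hj3.symm
      have hper' : Function.IsPeriodicPt f (j-1) i := hinj h5
      exact Function.not_isPeriodicPt_of_pos_of_lt_minimalPeriod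
        (by omega) (by omega : j - 1 < Function.minimalPeriod f i) hper'
  · -- f i = f^[j+1] i and i = f^[j] i
    exact Function.not_isPeriodicPt_of_pos_of_lt_minimalPeriod
      (by omega : j ≠ 0) (by omega : j < Function.minimalPeriod f i)
      (hj4.symm : Function.IsPeriodicPt f j i)


def SkewSymmetrizable {n : ℕ} (B : Matrix (Fin n) (Fin n) ℤ) : Prop :=
  ∃ d : Fin n → ℤ, (∀ i, 0 < d i) ∧ ∀ i j, d i * B i j = - (d j * B j i)

/-- The underlying (simple) graph of a matrix `B`: an edge between `i` and `j`
exactly when `B i j ≠ 0`. -/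
def underlyingGraph {n : ℕ} (B : Matrix (Fin n) (Fin n) ℤ) : SimpleGraph (Fin n) :=
  SimpleGraph.fromRel (fun i j => B i j ≠ 0)

theorem stmt4 {n : ℕ} (B : Matrix (Fin n) (Fin n) ℤ) (hB : SkewSymmetrizable B)
    (htree : (underlyingGraph B).IsTree) :
    (Odd n → B.det = 0 ∧ Matrix.det (Matrix.of fun i j => |B i j|) = 0) ∧
    (Even n → B.det = (-1) ^ (n / 2) * Matrix.det (Matrix.of fun i j => |B i j|)) := by
  obtain ⟨d, hd, hskew⟩ := hB
  have hdiag : ∀ i, B i i = 0 := by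
    intro i
    have h := hskew i i
    have h0 : d i * B i i = 0 := by linarith
    rcases mul_eq_zero.mp h0 with h1 | h1
    · exact absurd h1 (hd i).ne'
    · exact h1
  have hopp : ∀ i j, B j i ≠ 0 → B i j * B j i = -(|B i j| * |B j i|) := by
    intro i j hbj
    have ha : B i j ≠ 0 := by
      intro h0
      apply hbj
      have h := hskew i j
      rw [h0, mul_zero] at h
      have : d j * B j i = 0 := by linarith
      rcases mul_eq_zero.mp this with h1 | h1
      · exact absurd h1 (hd j).ne'
      · exact h1
    have ha2 : 0 < B i j ^ 2 := by positivity
    have h1 : d j * (B i j * B j i) = -(d i * B i j ^ 2) := by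
      linear_combination (B i j) * hskew i j
    have h2 : d j * (B i j * B j i) < 0 := by
      rw [h1]
      have := mul_pos (hd i) ha2
      linarith
    have hab : B i j * B j i < 0 := by
      by_contra hge
      push_neg at hge
      have := mul_nonneg (hd j).le hge
      linarith
    rw [← abs_mul]
    have := abs_of_neg hab
    linarith
  have key : ∀ σ : Equiv.Perm (Fin n),
      (∏ i, B (σ i) i = 0 ∧ ∏ i : Fin n, |B (σ i) i| = 0) ∨
      (∃ k, n = 2 * k ∧ ∏ i, B (σ i) i = (-1 : ℤ) ^ k * ∏ i : Fin n, |B (σ i) i|) := by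
    intro σ
    by_cases hz : ∃ i, B (σ i) i = 0
    · left
      obtain ⟨i, hi⟩ := hz
      exact ⟨Finset.prod_eq_zero (Finset.mem_univ i) hi,
        Finset.prod_eq_zero (Finset.mem_univ i) (by rw [hi]; simp)⟩
    · right
      push_neg at hz
      have hne : ∀ i, σ i ≠ i := by
        intro i hii
        apply hz i
        rw [hii]
        exact hdiag i
      have hadj : ∀ i, (underlyingGraph B).Adj i (σ i) := by
        intro i
        show (SimpleGraph.fromRel _).Adj i (σ i)
        rw [SimpleGraph.fromRel_adj]
        exact ⟨Ne.symm (hne i), Or.inr (hz i)⟩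
      have hinv := invol htree.IsAcyclic σ hadj
      have hmul : ∀ i ∈ Finset.univ, (fun i => B (σ i) i) i * (fun i => B (σ i) i) (σ i)
          = (-1) * ((fun i => |B (σ i) i|) i * (fun i => |B (σ i) i|) (σ i)) := by
        intro i _
        simp only [hinv i]
        rw [mul_comm (B (σ i) i), hopp i (σ i) (hz i)]
        ring
      obtain ⟨k, hk, hp⟩ := pairing (⇑σ) (fun i => B (σ i) i) (fun i => |B (σ i) i|)
        (-1) Finset.univ (fun i _ => Finset.mem_univ _) (fun i _ => hinv i)
        (fun i _ => hne i) hmul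
      exact ⟨k, by simpa using hk, by simpa using hp⟩
  constructor
  · intro hodd
    have hall : ∀ σ : Equiv.Perm (Fin n),
        ∏ i, B (σ i) i = 0 ∧ ∏ i : Fin n, |B (σ i) i| = 0 := by
      intro σ
      rcases key σ with h | ⟨k, hk, _⟩
      · exact h
      · exfalso
        obtain ⟨j, hj⟩ := hodd
        omega
    constructor
    · rw [Matrix.det_apply']
      apply Finset.sum_eq_zero
      intro σ _
      rw [(hall σ).1, mul_zero]
    · rw [Matrix.det_apply']
      apply Finset.sum_eq_zero
      intro σ _
      have := (hall σ).2
      simp only [Matrix.of_apply]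
      rw [this, mul_zero]
  · intro heven
    rw [Matrix.det_apply', Matrix.det_apply', Finset.mul_sum]
    apply Finset.sum_congr rfl
    intro σ _
    rcases key σ with ⟨h1, h2⟩ | ⟨k, hk, hp⟩
    · simp only [Matrix.of_apply]
      rw [h1, h2]
      ring
    · have hk2 : n / 2 = k := by omega
      rw [hk2]
      simp only [Matrix.of_apply]
      rw [hp]
      ring
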